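/- Let y1, y2 : (0,1) → ℝ be twice differentiable and set K = exp∘y1, phi = exp∘y2. Suppose that on (0,1) the equations (E2) y1'' + (1/2)(y1')^2 − x^{-1}(5+7x^2)(1−x^2)^{-1} y1' + 8(1−x^2)^{-2}(6 − 8 K^{-1/3} phi^{-1/3} + 2 K^{-1/3} phi^{-4/3}) = 0 and (E3) y2'' + (1/2) y1' y2' − 2 x^{-1}(1+2x^2)(1−x^2)^{-1} y2' + 32 (1−x^2)^{-2} K^{-1/3} phi^{-1/3}(phi^{-1} − 1) = 0 hold. Define Phi(x) = (y1'(x))^2 − (y2'(x))^2 − 12 x^{-1}(1+x^2)(1−x^2)^{-1} y1'(x) + 48(1−x^2)^{-2}(3 − 4 (K(x) phi(x))^{-1/3} + K(x)^{-1/3} phi(x)^{-4/3}). Then Phi is differentiable on (0,1) and satisfies the first-order linear equation Phi'(x) + ( y1'(x) − 4 x^{-1}(1+2x^2)(1−x^2)^{-1} ) Phi(x) = 0 for all x ∈ (0,1). -/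

import Mathlib

open Real Set

lemma exp_rpow_third (w : ℝ) : Real.exp w ^ (-(1:ℝ)/3) = Real.exp (-w/3) := by
  rw [← Real.exp_mul]; congr 1; ring

lemma exp_rpow_four_third (w : ℝ) :
    Real.exp w ^ (-(4:ℝ)/3) = (Real.exp (-w/3)) ^ (4:ℕ) := by
  rw [← Real.exp_mul, ← Real.exp_nat_mul]; congr 1; push_cast; ring

lemma exp_inv_cube (w : ℝ) : (Real.exp w)⁻¹ = (Real.exp (-w/3)) ^ (3:ℕ) := by
  rw [← Real.exp_neg, ← Real.exp_nat_mul]; congr 1; push_cast; ring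

/-- The constraint quantity `Phi` of the Berger Einstein ODE system, with
`K = exp ∘ y1`, `phi = exp ∘ y2`:
`Phi = (y1')² − (y2')² − 12x⁻¹(1+x²)(1−x²)⁻¹ y1'
  + 48(1−x²)⁻²(3 − 4(K phi)^{-1/3} + K^{-1/3} phi^{-4/3})`. -/
noncomputable def BergerPhi (y1 y2 : ℝ → ℝ) (x : ℝ) : ℝ :=
  (deriv y1 x)^2 - (deriv y2 x)^2 - 12 * x⁻¹ * (1 + x^2) * (1 - x^2)⁻¹ * deriv y1 x
    + 48 * ((1 - x^2)⁻¹)^2 *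
      (3 - 4 * (Real.exp (y1 x) * Real.exp (y2 x)) ^ (-(1:ℝ)/3)
         + Real.exp (y1 x) ^ (-(1:ℝ)/3) * Real.exp (y2 x) ^ (-(4:ℝ)/3))

lemma BergerPhi_eq (y1 y2 : ℝ → ℝ) :
    BergerPhi y1 y2 = fun t =>
      (deriv y1 t)^2 - (deriv y2 t)^2 - 12 * t⁻¹ * (1 + t^2) * (1 - t^2)⁻¹ * deriv y1 t
        + 48 * ((1 - t^2)⁻¹)^2 *
          (3 - 4 * (Real.exp (-(y1 t)/3) * Real.exp (-(y2 t)/3))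
             + Real.exp (-(y1 t)/3) * (Real.exp (-(y2 t)/3)) ^ (4:ℕ)) := by
  funext t
  rw [BergerPhi, ← Real.exp_add, exp_rpow_third, exp_rpow_third, exp_rpow_four_third]
  rw [show -(y1 t + y2 t)/3 = -(y1 t)/3 + -(y2 t)/3 by ring, Real.exp_add]

/-- if (E2) and (E3) hold on `(0,1)`, the constraint quantity `Phi` is
differentiable on `(0,1)` and satisfies `Phi' + (y1' − 4x⁻¹(1+2x²)(1−x²)⁻¹) Phi = 0`. -/
theorem berger_Phi_ode (y1 y2 : ℝ → ℝ)
    (hd1 : ∀ t ∈ Ioo (0:ℝ) 1, DifferentiableAt ℝ y1 t)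
    (hd1' : ∀ t ∈ Ioo (0:ℝ) 1, DifferentiableAt ℝ (deriv y1) t)
    (hd2 : ∀ t ∈ Ioo (0:ℝ) 1, DifferentiableAt ℝ y2 t)
    (hd2' : ∀ t ∈ Ioo (0:ℝ) 1, DifferentiableAt ℝ (deriv y2) t)
    (hE2 : ∀ x ∈ Ioo (0:ℝ) 1, deriv (deriv y1) x + (1/2) * (deriv y1 x)^2
      - x⁻¹ * (5 + 7*x^2) * (1 - x^2)⁻¹ * deriv y1 x
      + 8 * ((1 - x^2)⁻¹)^2 *
        (6 - 8 * Real.exp (y1 x) ^ (-(1:ℝ)/3) * Real.exp (y2 x) ^ (-(1:ℝ)/3)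
           + 2 * Real.exp (y1 x) ^ (-(1:ℝ)/3) * Real.exp (y2 x) ^ (-(4:ℝ)/3)) = 0)
    (hE3 : ∀ x ∈ Ioo (0:ℝ) 1, deriv (deriv y2) x + (1/2) * deriv y1 x * deriv y2 x
      - 2 * x⁻¹ * (1 + 2*x^2) * (1 - x^2)⁻¹ * deriv y2 x
      + 32 * ((1 - x^2)⁻¹)^2 * Real.exp (y1 x) ^ (-(1:ℝ)/3)
        * Real.exp (y2 x) ^ (-(1:ℝ)/3) * ((Real.exp (y2 x))⁻¹ - 1) = 0) :
    ∀ x ∈ Ioo (0:ℝ) 1,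
      HasDerivAt (BergerPhi y1 y2)
        (-((deriv y1 x - 4 * x⁻¹ * (1 + 2*x^2) * (1 - x^2)⁻¹) * BergerPhi y1 y2 x)) x := by
  intro x hx
  obtain ⟨hx0', hx1⟩ := hx
  have hx0 : x ≠ 0 := ne_of_gt hx0'
  have hs0 : (1 : ℝ) - x^2 ≠ 0 := by nlinarith
  -- basic derivatives
  have hy1 : HasDerivAt y1 (deriv y1 x) x := (hd1 x ⟨hx0', hx1⟩).hasDerivAt
  have hy2 : HasDerivAt y2 (deriv y2 x) x := (hd2 x ⟨hx0', hx1⟩).hasDerivAt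
  have hA : HasDerivAt (deriv y1) (deriv (deriv y1) x) x := (hd1' x ⟨hx0', hx1⟩).hasDerivAt
  have hB : HasDerivAt (deriv y2) (deriv (deriv y2) x) x := (hd2' x ⟨hx0', hx1⟩).hasDerivAt
  -- rational pieces
  have hinv : HasDerivAt (fun t : ℝ => t⁻¹) (-(x^2)⁻¹) x := hasDerivAt_inv hx0
  have hsq : HasDerivAt (fun t : ℝ => 1 + t^2) ((2:ℕ) * x ^ (1:ℕ)) x :=
    (hasDerivAt_pow 2 x).const_add 1
  have hms : HasDerivAt (fun t : ℝ => 1 - t^2) (-((2:ℕ) * x ^ (1:ℕ))) x :=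
    (hasDerivAt_pow 2 x).const_sub 1
  have hsinv : HasDerivAt (fun t : ℝ => (1 - t^2)⁻¹)
      (-(-((2:ℕ) * x ^ (1:ℕ))) / (1 - x^2)^2) x := hms.inv hs0
  have hterm3 := (((hinv.const_mul (12:ℝ)).mul hsq).mul hsinv).mul hA
  -- exponential pieces
  have hu : HasDerivAt (fun t => Real.exp (-(y1 t)/3))
      (Real.exp (-(y1 x)/3) * (-(deriv y1 x)/3)) x := (hy1.neg.div_const 3).exp
  have hv : HasDerivAt (fun t => Real.exp (-(y2 t)/3))
      (Real.exp (-(y2 x)/3) * (-(deriv y2 x)/3)) x := (hy2.neg.div_const 3).exp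
  have hinner := ((hu.mul hv).const_mul (4:ℝ)).const_sub (3:ℝ) |>.add (hu.mul (hv.pow 4))
  have hterm4 := ((hsinv.pow 2).const_mul (48:ℝ)).mul hinner
  have hF := (((hA.pow 2).sub (hB.pow 2)).sub hterm3).add hterm4
  rw [BergerPhi_eq]
  beta_reduce
  convert hF using 1
  case e'_4 => rfl
  case e'_5 => rfl
  case e'_8 => rfl
  simp only [Pi.mul_apply, Pi.pow_apply, Pi.add_apply, Pi.sub_apply]
  -- now an algebraic identity
  have hE2x := hE2 x ⟨hx0', hx1⟩
  have hE3x := hE3 x ⟨hx0', hx1⟩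
  rw [exp_rpow_third, exp_rpow_third, exp_rpow_four_third] at hE2x
  rw [exp_rpow_third, exp_rpow_third, exp_inv_cube] at hE3x
  set a := deriv y1 x
  set b := deriv y2 x
  set u := Real.exp (-(y1 x)/3)
  set v := Real.exp (-(y2 x)/3)
  have ha' : deriv (deriv y1) x = -(1/2) * a^2
      + x⁻¹ * (5 + 7*x^2) * (1 - x^2)⁻¹ * a
      - 8 * ((1 - x^2)⁻¹)^2 * (6 - 8 * u * v + 2 * u * v^4) := by
    linear_combination hE2x
  have hb' : deriv (deriv y2) x = -(1/2) * a * b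
      + 2 * x⁻¹ * (1 + 2*x^2) * (1 - x^2)⁻¹ * b
      - 32 * ((1 - x^2)⁻¹)^2 * u * v * (v^3 - 1) := by
    linear_combination hE3x
  rw [ha', hb']
  push_cast
  field_simp
  ring
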